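/- Let W : ℝ^{m×p₂} → ℝⁿ be a linear map, let σ, c, c₁ > 0, let r ≥ 1, let z ∈ ℝⁿ, and let E ∈ ℝ^{m×p₂}. Suppose that ‖W(E) − z‖₂² ≤ σ²(n + c₁·r·max(m,p₂)), that ‖z‖₂² ≥ σ²(n − c₁·r·max(m,p₂)), that ‖W*(z)‖ ≤ c·σ·√(max(m,p₂)), and that ‖E‖_* ≤ 2√(2r)‖E‖_F. Then ‖W(E)‖₂² ≤ 4c·σ·√(2r)·‖E‖_F·√(max(m,p₂)) + 2c₁·σ²·r·max(m,p₂). -/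

import Mathlib

noncomputable section
open MeasureTheory

/-- Frobenius norm of a real matrix. -/
def frobNorm {a b : ℕ} (X : Matrix (Fin a) (Fin b) ℝ) : ℝ :=
  Real.sqrt (∑ i, ∑ j, (X i j) ^ 2)

/-- Euclidean norm of a vector. -/
def l2Norm {n : ℕ} (v : Fin n → ℝ) : ℝ :=
  Real.sqrt (∑ i, (v i) ^ 2)

/-- Sum of Euclidean norms of the rows (ℓ_{1,2} norm). -/
def l12Norm {a b : ℕ} (X : Matrix (Fin a) (Fin b) ℝ) : ℝ :=
  ∑ i, Real.sqrt (∑ j, (X i j) ^ 2)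

/-- Nuclear norm: sum of the singular values of `X`. -/
def nuclearNorm {a b : ℕ} (X : Matrix (Fin a) (Fin b) ℝ) : ℝ :=
  ∑ i, Real.sqrt ((Matrix.isHermitian_conjTranspose_mul_self X : (X.transpose * X).IsHermitian).eigenvalues i)

/-- Spectral norm (ℓ₂ operator norm). -/
def specNorm {a b : ℕ} (X : Matrix (Fin a) (Fin b) ℝ) : ℝ :=
  sSup ((fun v => l2Norm (X.mulVec v)) '' {v | l2Norm v ≤ 1})

/-- Number of nonzero rows. -/
def rowSparsity {a b : ℕ} (X : Matrix (Fin a) (Fin b) ℝ) : ℕ :=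
  {i | X i ≠ 0}.ncard

/-- The set 𝕏_{k,r} of matrices with at most `k` nonzero rows and rank at most `r`. -/
def sparseLowRank (p₁ p₂ k r : ℕ) : Set (Matrix (Fin p₁) (Fin p₂) ℝ) :=
  {X | rowSparsity X ≤ k ∧ X.rank ≤ r}

/-- Gaussian measure on ℝⁿ with mean `μ` and covariance `σ² Iₙ`. -/
def gaussianPi (n : ℕ) (μ : Fin n → ℝ) (σ : ℝ) : Measure (Fin n → ℝ) :=
  Measure.pi fun i => ProbabilityTheory.gaussianReal (μ i) (Real.toNNReal (σ ^ 2))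

lemma l2Norm_sq {n : ℕ} (v : Fin n → ℝ) : l2Norm v ^ 2 = ∑ i, v i ^ 2 :=
  Real.sq_sqrt (by positivity)

lemma l2Norm_smul {n : ℕ} (t : ℝ) (v : Fin n → ℝ) : l2Norm (t • v) = |t| * l2Norm v := by
  unfold l2Norm
  simp_rw [Pi.smul_apply, smul_eq_mul, mul_pow, ← Finset.mul_sum,
    Real.sqrt_mul (sq_nonneg t), Real.sqrt_sq_eq_abs]

lemma l2Norm_mulVec_le_frob {a b : ℕ} (A : Matrix (Fin a) (Fin b) ℝ) (v : Fin b → ℝ) :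
    l2Norm (A.mulVec v) ≤ frobNorm A * l2Norm v := by
  unfold l2Norm frobNorm
  rw [← Real.sqrt_mul (by positivity)]
  apply Real.sqrt_le_sqrt
  rw [Finset.sum_mul]
  refine Finset.sum_le_sum fun i _ => ?_
  have : A.mulVec v i = ∑ j, A i j * v j := rfl
  rw [this]
  exact Finset.sum_mul_sq_le_sq_mul_sq _ _ _

lemma specNorm_bdd {a b : ℕ} (A : Matrix (Fin a) (Fin b) ℝ) :
    BddAbove ((fun v => l2Norm (A.mulVec v)) '' {v | l2Norm v ≤ 1}) := by
  refine ⟨frobNorm A, ?_⟩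
  rintro x ⟨v, hv, rfl⟩
  calc l2Norm (A.mulVec v) ≤ frobNorm A * l2Norm v := l2Norm_mulVec_le_frob A v
    _ ≤ frobNorm A * 1 := mul_le_mul_of_nonneg_left hv (Real.sqrt_nonneg _)
    _ = frobNorm A := mul_one _

lemma l2Norm_mulVec_le {a b : ℕ} (A : Matrix (Fin a) (Fin b) ℝ) (v : Fin b → ℝ) :
    l2Norm (A.mulVec v) ≤ specNorm A * l2Norm v := by
  rcases eq_or_ne (l2Norm v) 0 with h | h
  · have hv : v = 0 := by
      have h0 : ∑ j, v j ^ 2 = 0 := by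
        have := (Real.sqrt_eq_zero (by positivity)).mp h
        exact this
      funext j
      have := (Finset.sum_eq_zero_iff_of_nonneg (fun j _ => sq_nonneg (v j))).mp h0 j
        (Finset.mem_univ j)
      exact pow_eq_zero_iff (n := 2) (by norm_num) |>.mp this
    simp [hv, Matrix.mulVec_zero, l2Norm, h]
  · have hpos : 0 < l2Norm v := lt_of_le_of_ne (Real.sqrt_nonneg _) (Ne.symm h)
    have h1 : l2Norm ((l2Norm v)⁻¹ • v) = 1 := by
      rw [l2Norm_smul, abs_of_nonneg (by positivity), inv_mul_cancel₀ h]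
    have hmem : l2Norm (A.mulVec ((l2Norm v)⁻¹ • v)) ∈
        ((fun v => l2Norm (A.mulVec v)) '' {v | l2Norm v ≤ 1}) :=
      ⟨_, le_of_eq h1, rfl⟩
    have hle := le_csSup (specNorm_bdd A) hmem
    rw [Matrix.mulVec_smul, l2Norm_smul, abs_of_nonneg (by positivity)] at hle
    calc l2Norm (A.mulVec v) = l2Norm v * ((l2Norm v)⁻¹ * l2Norm (A.mulVec v)) := by
          field_simp
      _ ≤ l2Norm v * specNorm A := mul_le_mul_of_nonneg_left hle hpos.le
      _ = specNorm A * l2Norm v := mul_comm _ _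

lemma trace_le_spec_mul_nuclear {a b : ℕ} (A E : Matrix (Fin a) (Fin b) ℝ) :
    ∑ i, ∑ j, A i j * E i j ≤ specNorm A * nuclearNorm E := by
  classical
  set hE : (E.transpose * E).IsHermitian := Matrix.isHermitian_conjTranspose_mul_self E with hhE
  set V := hE.eigenvectorBasis with hV
  -- completeness relation
  have hcomp : ∀ j j' : Fin b, ∑ k, V k j * V k j' = if j = j' then 1 else 0 := by
    intro j j'
    have h := V.sum_inner_mul_inner (EuclideanSpace.single j (1:ℝ))
      (EuclideanSpace.single j' (1:ℝ))
    simpa [EuclideanSpace.inner_single_left, EuclideanSpace.inner_single_right,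
      EuclideanSpace.single_apply, eq_comm] using h
  -- orthonormality
  have horth : ∀ k : Fin b, ∑ j, V k j ^ 2 = 1 := by
    intro k
    have h := V.orthonormal
    rw [orthonormal_iff_ite] at h
    have hk : (inner ℝ (V k) (V k) : ℝ) = 1 := by simpa using h k k
    rw [← hk]
    simp only [PiLp.inner_apply, RCLike.inner_apply, conj_trivial, sq, mul_comm]
  -- trace identity
  have key : ∑ i, ∑ j, A i j * E i j
      = ∑ k : Fin b, ∑ i, A.mulVec (V k) i * E.mulVec (V k) i := by
    have step : ∀ (k : Fin b) (i : Fin a),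
        A.mulVec (V k) i * E.mulVec (V k) i
          = ∑ j, ∑ j', A i j * E i j' * (V k j * V k j') := by
      intro k i
      show (∑ j, A i j * V k j) * (∑ j', E i j' * V k j')
        = ∑ j, ∑ j', A i j * E i j' * (V k j * V k j')
      rw [Finset.sum_mul_sum]
      exact Finset.sum_congr rfl fun j _ => Finset.sum_congr rfl fun j' _ => by ring
    simp_rw [step]
    conv_rhs => rw [Finset.sum_comm]
    refine Finset.sum_congr rfl fun i _ => ?_
    have hmid : ∑ k : Fin b, ∑ j, ∑ j', A i j * E i j' * (V k j * V k j')
        = ∑ j, ∑ j', A i j * E i j' * ∑ k, V k j * V k j' := by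
      rw [Finset.sum_comm]
      refine Finset.sum_congr rfl fun j _ => ?_
      rw [Finset.sum_comm]
      refine Finset.sum_congr rfl fun j' _ => ?_
      rw [Finset.mul_sum]
    rw [hmid]
    refine Finset.sum_congr rfl fun j _ => ?_
    simp_rw [hcomp]
    simp
  -- norm of E applied to eigenvectors
  have hEv : ∀ k : Fin b, ∑ i, E.mulVec (V k) i ^ 2 = hE.eigenvalues k := by
    intro k
    set v : Fin b → ℝ := ⇑(V k) with hv
    have h1 : ∀ j, (∑ j', (∑ i, E i j * E i j') * v j') = hE.eigenvalues k * v j := by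
      intro j
      have h0 := congrFun (hE.mulVec_eigenvectorBasis k) j
      simpa [Matrix.mulVec, dotProduct, Matrix.mul_apply, Matrix.conjTranspose_apply,
        Finset.sum_mul, ← hv] using h0
    have expand : ∀ i, E.mulVec v i ^ 2
        = ∑ j, ∑ j', v j * (E i j * E i j' * v j') := by
      intro i
      rw [sq]
      show (∑ j, E i j * v j) * (∑ j', E i j' * v j') = _
      rw [Finset.sum_mul_sum]
      exact Finset.sum_congr rfl fun j _ => Finset.sum_congr rfl fun j' _ => by ring
    calc ∑ i, E.mulVec v i ^ 2
        = ∑ i, ∑ j, ∑ j', v j * (E i j * E i j' * v j') := by simp_rw [expand]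
      _ = ∑ j, v j * ∑ j', (∑ i, E i j * E i j') * v j' := by
          rw [Finset.sum_comm]
          refine Finset.sum_congr rfl fun j _ => ?_
          rw [Finset.mul_sum, Finset.sum_comm]
          refine Finset.sum_congr rfl fun j' _ => ?_
          rw [← Finset.mul_sum, ← Finset.sum_mul]
      _ = ∑ j, v j * (hE.eigenvalues k * v j) := by simp_rw [h1]
      _ = hE.eigenvalues k * ∑ j, v j ^ 2 := by
          rw [Finset.mul_sum]
          exact Finset.sum_congr rfl fun j _ => by ring
      _ = hE.eigenvalues k := by
          have hv2 : ∑ j, v j ^ 2 = 1 := horth k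
          rw [hv2, mul_one]
  -- put it together
  rw [key, nuclearNorm, Finset.mul_sum]
  refine Finset.sum_le_sum fun k _ => ?_
  have cs : ∑ i, A.mulVec (V k) i * E.mulVec (V k) i
      ≤ l2Norm (A.mulVec (V k)) * l2Norm (E.mulVec (V k)) :=
    Real.sum_mul_le_sqrt_mul_sqrt _ _ _
  have hA : l2Norm (A.mulVec (V k)) ≤ specNorm A := by
    have h := l2Norm_mulVec_le A (V k)
    have hv1 : l2Norm (V k : Fin b → ℝ) = 1 := by
      rw [l2Norm, horth, Real.sqrt_one]
    rwa [hv1, mul_one] at h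
  have hE1 : l2Norm (E.mulVec (V k)) = Real.sqrt (hE.eigenvalues k) := by
    rw [l2Norm, hEv]
  refine cs.trans ?_
  rw [hE1]
  exact mul_le_mul_of_nonneg_right hA (Real.sqrt_nonneg _)

/-- upper bound on `‖W(E)‖₂²` from feasibility and the cone condition. -/
theorem measurement_error_upper_bound
    (m p₂ n r : ℕ) (hr : 1 ≤ r)
    (W : Matrix (Fin m) (Fin p₂) ℝ →ₗ[ℝ] (Fin n → ℝ))
    (σ c c₁ : ℝ) (hσ : 0 < σ) (hc : 0 < c) (hc₁ : 0 < c₁)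
    (z : Fin n → ℝ) (E : Matrix (Fin m) (Fin p₂) ℝ)
    (Wadj : (Fin n → ℝ) → Matrix (Fin m) (Fin p₂) ℝ)
    -- `Wadj` is the adjoint of `W` w.r.t. the trace inner product
    (hadj : ∀ (v : Fin n → ℝ) (B : Matrix (Fin m) (Fin p₂) ℝ),
      ∑ i, ∑ j, Wadj v i j * B i j = ∑ i, v i * W B i)
    (h1 : l2Norm (W E - z) ^ 2 ≤ σ ^ 2 * (n + c₁ * r * max m p₂))
    (h2 : σ ^ 2 * (n - c₁ * r * max m p₂) ≤ l2Norm z ^ 2)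
    (h3 : specNorm (Wadj z) ≤ c * σ * Real.sqrt (max m p₂))
    (h4 : nuclearNorm E ≤ 2 * Real.sqrt (2 * r) * frobNorm E) :
    l2Norm (W E) ^ 2 ≤
      4 * c * σ * Real.sqrt (2 * r) * frobNorm E * Real.sqrt (max m p₂)
        + 2 * c₁ * σ ^ 2 * r * max m p₂ := by
  rw [l2Norm_sq] at h1 h2 ⊢
  have hexp : ∑ i, W E i ^ 2
      = (∑ i, (W E - z) i ^ 2) + 2 * (∑ i, z i * W E i) - ∑ i, z i ^ 2 := by
    simp_rw [Pi.sub_apply, Finset.mul_sum, ← Finset.sum_add_distrib, ← Finset.sum_sub_distrib]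
    exact Finset.sum_congr rfl fun i _ => by ring
  have hdual : ∑ i, z i * W E i ≤ c * σ * Real.sqrt (max m p₂)
      * (2 * Real.sqrt (2 * r) * frobNorm E) := by
    rw [← hadj z E]
    refine (trace_le_spec_mul_nuclear (Wadj z) E).trans ?_
    have hnn : (0:ℝ) ≤ nuclearNorm E := Finset.sum_nonneg fun i _ => Real.sqrt_nonneg _
    exact mul_le_mul h3 h4 hnn (by positivity)
  have heq : 2 * (c * σ * Real.sqrt (max m p₂) * (2 * Real.sqrt (2 * r) * frobNorm E))
      = 4 * c * σ * Real.sqrt (2 * r) * frobNorm E * Real.sqrt (max m p₂) := by ring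
  linarith [hexp, hdual, h1, h2]
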